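/- Let B be a unital complex C*-algebra containing a dimension-drop system (s, f_{j,k}) of size n, and set b = s*s + ∑_{j=1}^n f_{j,1} s s* f_{1,j}. Then: (i) b is a positive element of norm at most 1; (ii) b commutes with f_{j,k} for all 1 ≤ j,k ≤ n; (iii) b commutes with s; and (iv) s b = b s = s s* s. -/

import Mathlib

/-- A *dimension-drop system* of size `n` in a unital C*-algebra `B`: elements `s` and
`f j k` (for `j k : Fin n`, where the index `0` plays the role of `1` in the paper) of norm
at most one satisfying the relations (R1)–(R4). -/
def IsDimDropSystem {B : Type*} [CStarAlgebra B] {n : ℕ} [NeZero n]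
    (s : B) (f : Fin n → Fin n → B) : Prop :=
  ‖s‖ ≤ 1 ∧ (∀ j k, ‖f j k‖ ≤ 1) ∧
    (∀ j k, star (f j k) = f k j) ∧
    (∀ j k l m, f j k * f l m = if k = l then f j j * f j m else 0) ∧
    f 0 0 * s = s ∧
    (∑ j, f j j) + star s * s = 1

/-- for a dimension-drop system `(s, f)`, the element
`b = s*s + ∑ j, f j 0 * s * s* * f 0 j` is a positive contraction, is central for all the
`f j k` and for `s`, and satisfies `s b = b s = s s* s`. -/
theorem dimDropSystem_b_central {B : Type*} [CStarAlgebra B] [PartialOrder B]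
    [StarOrderedRing B] {n : ℕ} [NeZero n]
    (s : B) (f : Fin n → Fin n → B) (hsys : IsDimDropSystem s f)
    (b : B) (hb : b = star s * s + ∑ j, f j 0 * (s * star s) * f 0 j) :
    (0 ≤ b ∧ ‖b‖ ≤ 1) ∧
      (∀ j k, b * f j k = f j k * b) ∧
      (b * s = s * b) ∧
      (s * b = s * (star s * s) ∧ b * s = s * (star s * s)) := by
  obtain ⟨hs, hf, hstar, hmul, h00, hsum⟩ := hsys
  -- collapsing sums of `ite`s
  have collapse : ∀ (g : Fin n → B) (j : Fin n),
      (∑ i, if i = j then g i else 0) = g j := by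
    intro g j; simp
  -- `star s * f 0 0 = star s`
  have hsf : star s * f 0 0 = star s := by
    have := congrArg star h00
    rwa [star_mul, hstar 0 0] at this
  -- `f j j * (f j 0 * s) = f j 0 * s`
  have hjj : ∀ j, f j j * (f j 0 * s) = f j 0 * s := by
    intro j
    have h1 : f j 0 * f 0 0 = f j j * f j 0 := by rw [hmul]; simp
    calc f j j * (f j 0 * s) = (f j j * f j 0) * s := (mul_assoc _ _ _).symm
      _ = (f j 0 * f 0 0) * s := by rw [h1]
      _ = f j 0 * (f 0 0 * s) := mul_assoc _ _ _
      _ = f j 0 * s := by rw [h00]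
  -- `f j j * s = if j = 0 then s else 0`
  have hdiag_s : ∀ j, f j j * s = if j = 0 then s else 0 := by
    intro j
    conv_lhs => rw [← h00, ← mul_assoc, hmul j j 0 0]
    by_cases hj : j = 0
    · subst hj; simp only [if_true, mul_assoc, h00]
    · simp [hj]
  have hsum_s : (∑ j, f j j) * s = s := by
    rw [Finset.sum_mul, Finset.sum_congr rfl fun j _ => hdiag_s j, collapse]
  -- `star s * s = 1 - ∑ f j j`
  have hpeq : star s * s = 1 - ∑ j, f j j := eq_sub_of_add_eq' hsum
  -- `(star s * s) * s = 0`
  have hts : (star s * s) * s = 0 := by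
    rw [hpeq, sub_mul, one_mul, hsum_s, sub_self]
  -- key vanishing: `(star s * s) * (f j 0 * s) = 0`
  have hkey : ∀ j, (star s * s) * (f j 0 * s) = 0 := by
    intro j
    rw [hpeq, sub_mul, one_mul, Finset.sum_mul]
    have e : ∀ k, f k k * (f j 0 * s) = if k = j then f j 0 * s else 0 := by
      intro k
      rw [← mul_assoc, hmul k k j 0]
      by_cases hkj : k = j
      · subst hkj; simp only [if_true, mul_assoc, hjj]
      · simp [hkj]
    rw [Finset.sum_congr rfl fun k _ => e k, collapse, sub_self]
  -- `s * (f j 0 * s) = 0`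
  have hsfs : ∀ j, s * (f j 0 * s) = 0 := by
    intro j
    have h2 : star (s * (f j 0 * s)) * (s * (f j 0 * s)) = 0 := by
      rw [star_mul]
      calc star (f j 0 * s) * star s * (s * (f j 0 * s))
          = star (f j 0 * s) * ((star s * s) * (f j 0 * s)) := by
            simp only [mul_assoc]
        _ = 0 := by rw [hkey j, mul_zero]
    exact (CStarRing.star_mul_self_eq_zero_iff _).mp h2
  -- positivity
  have hb0 : 0 ≤ b := by
    rw [hb]
    refine add_nonneg (star_mul_self_nonneg s) (Finset.sum_nonneg fun j _ => ?_)
    have e : f j 0 * (s * star s) * f 0 j = (f j 0 * s) * star (f j 0 * s) := by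
      rw [star_mul, hstar j 0]
      simp only [mul_assoc]
    rw [e]
    exact mul_star_self_nonneg _
  -- contractions
  have hss1 : star s * s ≤ 1 := by
    rw [← CStarAlgebra.norm_le_one_iff_of_nonneg _ (star_mul_self_nonneg s),
      CStarRing.norm_star_mul_self]
    exact mul_le_one₀ hs (norm_nonneg s) hs
  have hss1' : s * star s ≤ 1 := by
    have : star (star s) * star s ≤ 1 := by
      rw [← CStarAlgebra.norm_le_one_iff_of_nonneg _ (star_mul_self_nonneg (star s)),
        CStarRing.norm_star_mul_self, norm_star]
      exact mul_le_one₀ hs (norm_nonneg s) hs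
    rwa [star_star] at this
  have hp0 : 0 ≤ ∑ j, f j j := by
    have h1 : (∑ j, f j j) = 1 - star s * s := by rw [eq_sub_iff_add_eq, hsum]
    rw [h1]
    exact sub_nonneg.mpr hss1
  have hp1 : (∑ j, f j j) ≤ 1 := by
    have h1 : (∑ j, f j j) = 1 - star s * s := by rw [eq_sub_iff_add_eq, hsum]
    rw [h1]
    exact sub_le_self _ (star_mul_self_nonneg s)
  have hpsq : (∑ j, f j j) * (∑ j, f j j) ≤ ∑ j, f j j := by
    set q := CFC.sqrt (∑ j, f j j) with hq
    have hq2 : q * q = ∑ j, f j j := CFC.sqrt_mul_sqrt_self _ hp0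
    have h2 : q * (∑ j, f j j) * q ≤ q * 1 * q :=
      (IsSelfAdjoint.of_nonneg (CFC.sqrt_nonneg _)).conjugate_le_conjugate hp1
    have h3 : q * (∑ j, f j j) * q = (∑ j, f j j) * (∑ j, f j j) := by
      rw [← hq2]; simp only [mul_assoc]
    have h4 : q * 1 * q = ∑ j, f j j := by rw [mul_one, hq2]
    rwa [h3, h4] at h2
  have hSle : (∑ j, f j 0 * (s * star s) * f 0 j) ≤ ∑ j, f j j := by
    have each : ∀ j, f j 0 * (s * star s) * f 0 j ≤ f j j * f j j := by
      intro j
      have h5 := star_right_conjugate_le_conjugate hss1' (f j 0)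
      rw [hstar j 0] at h5
      have h2 : f j 0 * 1 * f 0 j = f j j * f j j := by
        rw [mul_one, hmul j 0 0 j]; simp
      rwa [h2] at h5
    calc (∑ j, f j 0 * (s * star s) * f 0 j) ≤ ∑ j, f j j * f j j :=
          Finset.sum_le_sum fun j _ => each j
      _ = (∑ j, f j j) * (∑ j, f j j) := by
          rw [Finset.sum_mul]
          refine Finset.sum_congr rfl fun j _ => ?_
          rw [Finset.mul_sum]
          have e : ∀ k, f j j * f k k = if k = j then f j j * f j j else 0 := by
            intro k
            rw [hmul j j k k]
            by_cases hjk : k = j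
            · subst hjk; simp
            · rw [if_neg (fun h => hjk h.symm), if_neg hjk]
          rw [Finset.sum_congr rfl fun k _ => e k, collapse]
      _ ≤ ∑ j, f j j := hpsq
  have hb1 : ‖b‖ ≤ 1 := by
    rw [CStarAlgebra.norm_le_one_iff_of_nonneg b hb0, hb, hpeq]
    calc 1 - (∑ j, f j j) + (∑ j, f j 0 * (s * star s) * f 0 j)
        ≤ 1 - (∑ j, f j j) + (∑ j, f j j) := add_le_add_right hSle _
      _ = 1 := sub_add_cancel _ _
  -- commutation with the f j k
  have hcomm : ∀ j k, b * f j k = f j k * b := by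
    intro j k
    have hL : b * f j k = f j k - f j j * f j k + f j 0 * s * (star s * f 0 k) := by
      rw [hb, add_mul, hpeq, sub_mul, one_mul, Finset.sum_mul, Finset.sum_mul]
      congr 1
      · congr 1
        have e : ∀ i, f i i * f j k = if i = j then f j j * f j k else 0 := by
          intro i
          rw [hmul i i j k]
          by_cases hij : i = j
          · subst hij; rfl
          · simp [hij]
        rw [Finset.sum_congr rfl fun i _ => e i, collapse]
      · have e : ∀ i, f i 0 * (s * star s) * f 0 i * f j k =
            if i = j then f j 0 * s * (star s * f 0 k) else 0 := by
          intro i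
          rw [mul_assoc, hmul 0 i j k]
          by_cases hij : i = j
          · subst hij
            simp only [if_true]
            calc f i 0 * (s * star s) * (f 0 0 * f 0 k)
                = f i 0 * s * ((star s * f 0 0) * f 0 k) := by simp only [mul_assoc]
              _ = f i 0 * s * (star s * f 0 k) := by rw [hsf]
          · simp [hij]
        rw [Finset.sum_congr rfl fun i _ => e i, collapse]
    have hR : f j k * b = f j k - f j j * f j k + f j 0 * s * (star s * f 0 k) := by
      rw [hb, mul_add, hpeq, mul_sub, mul_one, Finset.mul_sum, Finset.mul_sum]
      congr 1
      · congr 1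
        have e : ∀ i, f j k * f i i = if i = k then f j j * f j i else 0 := by
          intro i
          rw [hmul j k i i]
          by_cases hik : i = k
          · subst hik; simp
          · rw [if_neg (fun h => hik h.symm), if_neg hik]
        rw [Finset.sum_congr rfl fun i _ => e i, collapse]
      · have e : ∀ i, f j k * (f i 0 * (s * star s) * f 0 i) =
            if i = k then f j 0 * s * (star s * f 0 i) else 0 := by
          intro i
          rw [← mul_assoc, ← mul_assoc, hmul j k i 0]
          by_cases hik : i = k
          · subst hik
            simp only [if_true]
            calc f j j * f j 0 * (s * star s) * f 0 i
                = (f j j * (f j 0 * s)) * (star s * f 0 i) := by simp only [mul_assoc]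
              _ = f j 0 * s * (star s * f 0 i) := by rw [hjj j]
          · rw [if_neg (fun h => hik h.symm), if_neg hik, zero_mul, zero_mul]
        rw [Finset.sum_congr rfl fun i _ => e i, collapse]
    rw [hL, hR]
  -- products with s
  have hbs : b * s = s * (star s * s) := by
    rw [hb, add_mul, hts, zero_add, Finset.sum_mul]
    have e : ∀ i, f i 0 * (s * star s) * f 0 i * s =
        if i = 0 then s * (star s * s) else 0 := by
      intro i
      have h0i : f 0 i * s = if i = 0 then s else 0 := by
        conv_lhs => rw [← h00, ← mul_assoc, hmul 0 i 0 0]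
        by_cases hi : i = 0
        · subst hi; simp only [if_true, mul_assoc, h00]
        · simp [hi]
      rw [mul_assoc, h0i]
      by_cases hi : i = 0
      · subst hi
        simp only [if_true]
        calc f 0 0 * (s * star s) * s = (f 0 0 * s) * (star s * s) := by
              simp only [mul_assoc]
          _ = s * (star s * s) := by rw [h00]
      · simp [hi]
    rw [Finset.sum_congr rfl fun i _ => e i, collapse]
  have hsb : s * b = s * (star s * s) := by
    rw [hb, mul_add, Finset.mul_sum]
    have e : ∀ i, s * (f i 0 * (s * star s) * f 0 i) = 0 := by
      intro i
      calc s * (f i 0 * (s * star s) * f 0 i)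
          = (s * (f i 0 * s)) * (star s * f 0 i) := by simp only [mul_assoc]
        _ = 0 := by rw [hsfs i, zero_mul]
    simp [e]
  exact ⟨⟨hb0, hb1⟩, hcomm, by rw [hbs, hsb], hsb, hbs⟩
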